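/- Let L be a first-order language, M an L-structure, and ⫶ a ternary relation on subsets of M satisfying monotonicity and strong finite character. Suppose A, B, C ⊆ M are such that C ⫶_C B, and such that for every L-formula φ(x̄; ȳ), every tuple ē of elements of B∪C and every tuple ā of elements of A with M ⊨ φ(ā; ē), there is a tuple c̄ of elements of C with M ⊨ φ(c̄; ē). Then A ⫶_C B. -/
import Mathlib


universe u

/-- Remark 2.1.3: if `⫶` satisfies monotonicity and strong finite character,
`C ⫶_C B` holds, and the type of (an enumeration of) `A` over `B∪C` is finitely
satisfied in `C`, then `A ⫶_C B`. -/
theorem stmt_9 {L : FirstOrder.Language.{u, u}} {M : Type u} [L.Structure M]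
    (ind : Set M → Set M → Set M → Prop)
    (mono : ∀ A B C A' B' : Set M, ind A C B → A' ⊆ A → B' ⊆ B → ind A' C B')
    (sfc : ∀ A B C : Set M, ¬ ind A C B →
      ∃ (n m k : ℕ) (a : Fin n → M) (b : Fin m → M) (cc : Fin k → M)
        (φ : L.Formula (Fin n ⊕ Fin m ⊕ Fin k)),
        (∀ i, a i ∈ A) ∧ (∀ i, b i ∈ B) ∧ (∀ i, cc i ∈ C) ∧
        φ.Realize (Sum.elim a (Sum.elim b cc)) ∧
        ∀ a' : Fin n → M, φ.Realize (Sum.elim a' (Sum.elim b cc)) →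
          ¬ ind (Set.range a') C (Set.range b))
    (A B C : Set M)
    (hCB : ind C C B)
    (hfs : ∀ (n m : ℕ) (φ : L.Formula (Fin n ⊕ Fin m)) (e : Fin m → M),
      (∀ i, e i ∈ B ∪ C) →
      ∀ a : Fin n → M, (∀ i, a i ∈ A) → φ.Realize (Sum.elim a e) →
        ∃ c : Fin n → M, (∀ i, c i ∈ C) ∧ φ.Realize (Sum.elim c e)) :
    ind A C B := by
  by_contra h
  obtain ⟨n, m, k, a, b, cc, φ, ha, hb, hc, hreal, hbad⟩ := sfc A B C h
  set g : Fin n ⊕ (Fin m ⊕ Fin k) → Fin n ⊕ Fin (m + k) :=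
    Sum.map id finSumFinEquiv with hg
  set e : Fin (m + k) → M := Sum.elim b cc ∘ finSumFinEquiv.symm with he
  have hkey : ∀ a' : Fin n → M,
      Sum.elim a' e ∘ g = Sum.elim a' (Sum.elim b cc) := by
    intro a'
    funext x
    rcases x with i | j
    · rfl
    · simp [hg, he]
  have hBC : ∀ i, e i ∈ B ∪ C := by
    intro i
    rcases h' : finSumFinEquiv.symm i with j | j
    · exact Or.inl (by simpa [he, h'] using hb j)
    · exact Or.inr (by simpa [he, h'] using hc j)
  have hreal' : (φ.relabel g).Realize (Sum.elim a e) := by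
    rw [FirstOrder.Language.Formula.realize_relabel, hkey]
    exact hreal
  obtain ⟨c, hcC, hcreal⟩ := hfs n (m + k) (φ.relabel g) e hBC a ha hreal'
  rw [FirstOrder.Language.Formula.realize_relabel, hkey] at hcreal
  exact hbad c hcreal (mono C B C (Set.range c) (Set.range b) hCB
    (Set.range_subset_iff.2 hcC) (Set.range_subset_iff.2 hb))
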